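/- arXiv:1012.2063 — 3 statements merged into one kernel-verified Lean document; each statement's English description precedes it below -/
import Mathlib

section
/- Fix an integer k ≥ 0 and a real x > 0. Define h_k(x) as the finite continued fraction h_k(x) = x + 1/(x + 2/(x + 3/(⋯ + k/x))); formally, set b_k(x) = x and b_{j-1}(x) = x + j/b_j(x) for j = k, k-1, …, 1, and put h_k(x) = b_0(x). Then 1 - Φ(x) < φ(x)/h_k(x) if k is even, and 1 - Φ(x) > φ(x)/h_k(x) if k is odd. -/
open MeasureTheory Real

/-- Standard Gaussian density. -/
noncomputable def gaussPdf (x : ℝ) : ℝ := Real.exp (-x ^ 2 / 2) / Real.sqrt (2 * Real.pi)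

/-- Standard Gaussian distribution function. -/
noncomputable def gaussCdf (x : ℝ) : ℝ := ∫ t in Set.Iic x, gaussPdf t

/-- Finite continued fraction `hcf k g x = x + 1/(x + 2/(⋯ + k/(g x)))`,
with `hcf 0 g = g`. -/
noncomputable def hcf : ℕ → (ℝ → ℝ) → ℝ → ℝ
  | 0, g => g
  | (k + 1), g => hcf k (fun x => x + ((k : ℝ) + 1) / g x)

open Filter Set


lemma gaussPdf_eq (x : ℝ) : gaussPdf x = (Real.sqrt (2*Real.pi))⁻¹ * (Real.exp (-(1/2) * x ^ 2)) := by
  rw [gaussPdf, div_eq_inv_mul]; ring_nf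

lemma gaussPdf_pos (x : ℝ) : 0 < gaussPdf x := by
  apply div_pos (Real.exp_pos _); positivity

lemma int_pow_gauss (n : ℕ) : Integrable (fun t : ℝ => t ^ n * Real.exp (-(1/2) * t ^ 2)) := by
  have h := integrable_rpow_mul_exp_neg_mul_sq (b := 1/2) (by norm_num) (s := (n : ℝ))
    (by exact_mod_cast (by norm_num : (-1:ℝ) < 0).trans_le (Nat.cast_nonneg n))
  simpa [Real.rpow_natCast] using h

lemma int_pow_gaussPdf (n : ℕ) : Integrable (fun t : ℝ => t ^ n * gaussPdf t) := by
  have := ((int_pow_gauss n).const_mul ((Real.sqrt (2*Real.pi))⁻¹))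
  apply this.congr
  refine Eventually.of_forall fun t => ?_; simp only [gaussPdf_eq]; ring

lemma int_sub_pow_gaussPdf (n : ℕ) (x : ℝ) :
    Integrable (fun t : ℝ => (t - x) ^ n * gaussPdf t) := by
  have : (fun t : ℝ => (t - x) ^ n * gaussPdf t) =
      (fun t : ℝ => ∑ m ∈ Finset.range (n+1),
        ((-1:ℝ) ^ (m + n) * x ^ (n - m) * n.choose m) * (t ^ m * gaussPdf t)) := by
    funext t
    rw [sub_pow]
    rw [Finset.sum_mul]
    congr 1 with m
    ring
  rw [this]
  apply integrable_finset_sum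
  intro m _
  exact (int_pow_gaussPdf m).const_mul _

lemma tendsto_pow_gauss (n : ℕ) :
    Tendsto (fun t : ℝ => t ^ n * Real.exp (-(1/2) * t ^ 2)) atTop (nhds 0) := by
  have h := rpow_mul_exp_neg_mul_sq_isLittleO_exp_neg (b := 1/2) (by norm_num) (n : ℝ)
  have h2 : Tendsto (fun t : ℝ => Real.exp (-(1/2) * t)) atTop (nhds 0) := by
    apply Real.tendsto_exp_atBot.comp
    have : Tendsto (fun t : ℝ => (1/2) * t) atTop atTop :=
      Tendsto.const_mul_atTop (by norm_num) tendsto_id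
    exact (tendsto_neg_atTop_atBot.comp this).congr (by intro t; simp)
  have := h.tendsto_zero_of_tendsto h2
  simpa [Real.rpow_natCast] using this

lemma tendsto_pow_gaussPdf (n : ℕ) :
    Tendsto (fun t : ℝ => t ^ n * gaussPdf t) atTop (nhds 0) := by
  have := (tendsto_pow_gauss n).const_mul ((Real.sqrt (2*Real.pi))⁻¹)
  rw [mul_zero] at this
  apply this.congr
  intro t; simp only [gaussPdf_eq]; ring

lemma tendsto_sub_pow_gaussPdf (n : ℕ) (x : ℝ) :
    Tendsto (fun t : ℝ => (t - x) ^ n * gaussPdf t) atTop (nhds 0) := by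
  have : (fun t : ℝ => (t - x) ^ n * gaussPdf t) =
      (fun t : ℝ => ∑ m ∈ Finset.range (n+1),
        ((-1:ℝ) ^ (m + n) * x ^ (n - m) * n.choose m) * (t ^ m * gaussPdf t)) := by
    funext t
    rw [sub_pow, Finset.sum_mul]
    congr 1 with m
    ring
  rw [this]
  have : Tendsto (fun t : ℝ => ∑ m ∈ Finset.range (n+1),
      ((-1:ℝ) ^ (m + n) * x ^ (n - m) * n.choose m) * (t ^ m * gaussPdf t)) atTop
      (nhds (∑ m ∈ Finset.range (n+1), ((-1:ℝ) ^ (m + n) * x ^ (n - m) * n.choose m) * 0)) := by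
    apply tendsto_finset_sum
    intro m _
    exact (tendsto_pow_gaussPdf m).const_mul _
  simpa using this

lemma hasDerivAt_gaussPdf (t : ℝ) : HasDerivAt gaussPdf (-t * gaussPdf t) t := by
  have h1 : HasDerivAt (fun t : ℝ => -t ^ 2 / 2) (-t) t := by
    have := ((hasDerivAt_pow 2 t).neg).div_const 2
    simpa using this.congr_deriv (by ring)
  have h2 := (h1.exp).div_const (Real.sqrt (2 * Real.pi))
  apply h2.congr_deriv
  rw [gaussPdf]; ring

noncomputable def J (n : ℕ) (x : ℝ) : ℝ := ∫ t in Set.Ioi x, (t - x) ^ n * gaussPdf t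

lemma J_pos (n : ℕ) (x : ℝ) : 0 < J n x := by
  rw [J, setIntegral_pos_iff_support_of_nonneg_ae]
  · have hsub : Ioi x ⊆ (Function.support fun t => (t - x) ^ n * gaussPdf t) ∩ Ioi x :=
      fun t ht => ⟨ne_of_gt (mul_pos (pow_pos (sub_pos.2 ht) n) (gaussPdf_pos t)), ht⟩
    refine lt_of_lt_of_le ?_ (measure_mono hsub)
    rw [Real.volume_Ioi]; exact ENNReal.zero_lt_top
  · filter_upwards [ae_restrict_mem measurableSet_Ioi] with t ht
    exact le_of_lt (mul_pos (pow_pos (sub_pos.2 ht) n) (gaussPdf_pos t))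
  · exact (int_sub_pow_gaussPdf n x).integrableOn

lemma integral_gaussPdf : ∫ t : ℝ, gaussPdf t = 1 := by
  have h : ∫ t : ℝ, gaussPdf t = (Real.sqrt (2*Real.pi))⁻¹ * ∫ t : ℝ, Real.exp (-(1/2) * t ^ 2) := by
    rw [← integral_const_mul]
    congr 1 with t
    rw [gaussPdf_eq]
  rw [h, integral_gaussian]
  have h2 : Real.pi / (1/2) = 2 * Real.pi := by ring
  rw [h2]
  rw [inv_mul_cancel₀]
  positivity

lemma integrable_gaussPdf : Integrable gaussPdf := by
  have := int_pow_gaussPdf 0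
  simpa using this

lemma J_zero (x : ℝ) : J 0 x = 1 - gaussCdf x := by
  have h := intervalIntegral.integral_Iic_add_Ioi (b := x) (f := gaussPdf) (μ := volume)
    integrable_gaussPdf.integrableOn integrable_gaussPdf.integrableOn
  rw [integral_gaussPdf] at h
  have h2 : J 0 x = ∫ t in Set.Ioi x, gaussPdf t := by
    rw [J]; congr 1 with t; simp
  rw [gaussCdf] at *
  linarith

lemma J_rec (m : ℕ) (x : ℝ) :
    J (m+1) x + x * J m x - m * J (m-1) x = (x - x) ^ m * gaussPdf x := by
  have key : ∫ t in Set.Ioi x, ((t-x)^(m+1) * gaussPdf t + x * ((t-x)^m * gaussPdf t)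
      - (m:ℝ) * ((t-x)^(m-1) * gaussPdf t)) = 0 - (-((x-x)^m * gaussPdf x)) := by
    apply integral_Ioi_of_hasDerivAt_of_tendsto' (f := fun t => -((t-x)^m * gaussPdf t))
    · intro t _
      have hpow : HasDerivAt (fun t : ℝ => (t - x) ^ m) ((m:ℝ) * (t-x)^(m-1) * 1) t :=
        ((hasDerivAt_id t).sub_const x).pow m
      have := (hpow.mul (hasDerivAt_gaussPdf t)).neg
      apply this.congr_deriv
      rw [pow_succ]
      ring
    · exact (((int_sub_pow_gaussPdf (m+1) x).add
        ((int_sub_pow_gaussPdf m x).const_mul x)).sub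
        ((int_sub_pow_gaussPdf (m-1) x).const_mul m)).integrableOn
    · have := (tendsto_sub_pow_gaussPdf m x).neg
      simpa using this
  rw [integral_sub, integral_add, integral_const_mul, integral_const_mul] at key
  · simpa [J] using key
  · exact (int_sub_pow_gaussPdf (m+1) x).integrableOn
  · exact ((int_sub_pow_gaussPdf m x).const_mul x).integrableOn
  · exact ((int_sub_pow_gaussPdf (m+1) x).add ((int_sub_pow_gaussPdf m x).const_mul x)).integrableOn
  · exact ((int_sub_pow_gaussPdf (m-1) x).const_mul m).integrableOn

noncomputable def rho (n : ℕ) (x : ℝ) : ℝ := x + J (n+1) x / J n x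

lemma rho_gt (n : ℕ) (x : ℝ) : x < rho n x :=
  lt_add_of_pos_right _ (div_pos (J_pos _ _) (J_pos _ _))

lemma rho_eq (n : ℕ) (x : ℝ) : rho n x = x + ((n:ℝ)+1) / rho (n+1) x := by
  have h := J_rec (n+1) x
  rw [sub_self, zero_pow (Nat.succ_ne_zero n)] at h
  have ha := J_pos n x
  have hb := J_pos (n+1) x
  have hc := J_pos (n+2) x
  have hn : (0:ℝ) < (n:ℝ) + 1 := by positivity
  rw [rho, rho]
  have hsum : x + J (n+1+1) x / J (n+1) x = ((n:ℝ)+1) * J n x / J (n+1) x := by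
    field_simp
    push_cast at h ⊢
    linarith
  rw [hsum]
  congr 1
  rw [div_div_eq_mul_div]
  rw [div_eq_div_iff (ne_of_gt ha) (by positivity)]
  ring

lemma rho_zero (x : ℝ) : rho 0 x = gaussPdf x / (1 - gaussCdf x) := by
  have h := J_rec 0 x
  simp only [Nat.cast_zero, zero_mul, sub_zero, sub_self, pow_zero, one_mul, zero_add] at h
  have ha := J_pos 0 x
  rw [rho, ← J_zero]
  field_simp
  linarith

lemma hcf_rho (k : ℕ) : ∀ x : ℝ, hcf k (rho k) x = rho 0 x := by
  induction k with
  | zero => intro x; rfl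
  | succ k ih =>
    intro x
    have he : (fun y => y + ((k:ℝ)+1) / rho (k+1) y) = rho k := by
      funext y; exact (rho_eq k y).symm
    show hcf k (fun y => y + ((k:ℝ)+1) / rho (k+1) y) x = rho 0 x
    rw [he]; exact ih x

lemma hcf_lt (k : ℕ) : ∀ (x : ℝ) (g₁ g₂ : ℝ → ℝ), 0 < x → 0 < g₁ x → g₁ x < g₂ x →
    0 < hcf k g₁ x ∧ 0 < hcf k g₂ x ∧
    (Even k → hcf k g₁ x < hcf k g₂ x) ∧ (Odd k → hcf k g₂ x < hcf k g₁ x) := by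
  induction k with
  | zero =>
    intro x g₁ g₂ hx h1 h12
    exact ⟨h1, h1.trans h12, fun _ => h12, fun h => absurd h (by simp)⟩
  | succ k ih =>
    intro x g₁ g₂ hx h1 h12
    have h2 : 0 < g₂ x := h1.trans h12
    have hb_pos : 0 < x + ((k:ℝ)+1) / g₂ x := add_pos hx (div_pos (by positivity) h2)
    have hba : x + ((k:ℝ)+1) / g₂ x < x + ((k:ℝ)+1) / g₁ x := by
      apply add_lt_add_right
      exact div_lt_div_of_pos_left (by positivity) h1 h12
    obtain ⟨p1, p2, pev, pod⟩ :=
      ih x (fun y => y + ((k:ℝ)+1) / g₂ y) (fun y => y + ((k:ℝ)+1) / g₁ y) hx hb_pos hba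
    refine ⟨p2, p1, fun h => ?_, fun h => ?_⟩
    · exact pod (Nat.not_even_iff_odd.mp (Nat.even_add_one.mp h))
    · exact pev (Nat.not_odd_iff_even.mp (Nat.odd_add_one.mp h))

/-- Continued fraction bounds: 1 - Φ(x) < φ(x)/h_k(x) if k is even and
1 - Φ(x) > φ(x)/h_k(x) if k is odd, where h_k(x) = x + 1/(x + 2/(⋯ + k/x)). -/
theorem continued_fraction_bounds (k : ℕ) (x : ℝ) (hx : 0 < x) :
    (Even k → 1 - gaussCdf x < gaussPdf x / hcf k (fun t => t) x) ∧
    (Odd k → 1 - gaussCdf x > gaussPdf x / hcf k (fun t => t) x) := by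
  have hQ : 0 < 1 - gaussCdf x := by rw [← J_zero]; exact J_pos 0 x
  have hφ := gaussPdf_pos x
  obtain ⟨hp1, hp2, hev, hod⟩ := hcf_lt k x (fun t => t) (rho k) hx hx (rho_gt k x)
  have heq : hcf k (rho k) x = gaussPdf x / (1 - gaussCdf x) := by
    rw [hcf_rho, rho_zero]
  constructor
  · intro hk
    have h := hev hk
    rw [heq] at h
    rw [lt_div_iff₀ hp1]
    have := (lt_div_iff₀ hQ).mp h
    linarith [mul_comm (hcf k (fun t => t) x) (1 - gaussCdf x)]
  · intro hk
    have h := hod hk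
    rw [heq] at h
    rw [gt_iff_lt, div_lt_iff₀ hp1]
    have := (div_lt_iff₀ hQ).mp h
    linarith [mul_comm (hcf k (fun t => t) x) (1 - gaussCdf x)]
end

section
/- For every integer k ≥ 0, the constant c_k* satisfies 1/(8(k+1)) < c_k* − k − 1/2 < 1/(8·c_k*) < 1/(8(k + 1/2)). -/
open MeasureTheory Real

/-- The constants `c_k^*`: `c_0^* = 2/π` and `c_k^* = k² / c_{k-1}^*`. -/
noncomputable def cstar : ℕ → ℝ
  | 0 => 2 / Real.pi
  | (k + 1) => ((k : ℝ) + 1) ^ 2 / cstar k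

/- ------------------  auxiliary material  ------------------ -/

open Filter Topology

namespace CstarAux

/-- lower comparison sequence -/
noncomputable def gB (k : ℕ) : ℝ := (k : ℝ) + 1/2 + 1/(8*(k : ℝ)+8)

/-- upper comparison sequence -/
noncomputable def uB (k : ℕ) : ℝ :=
  (k : ℝ) + 1/2 + (16*(k : ℝ)^2+16*(k : ℝ)+29)/((8*(k : ℝ)+4)*(16*(k : ℝ)^2+16*(k : ℝ)+38))

lemma gB_lb (k : ℕ) : (k : ℝ) + 1/2 < gB k := by
  have h : (0:ℝ) < 8*(k:ℝ)+8 := by positivity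
  have : 0 < 1/(8*(k : ℝ)+8) := by positivity
  unfold gB; linarith

lemma gB_ub (k : ℕ) : gB k ≤ (k : ℝ) + 1 := by
  have h : (0:ℝ) < 8*(k:ℝ)+8 := by positivity
  have : 1/(8*(k : ℝ)+8) ≤ 1/2 := by
    apply one_div_le_one_div_of_le (by norm_num : (0:ℝ) < 2)
    nlinarith [(Nat.cast_nonneg k : (0:ℝ) ≤ (k:ℝ))]
  unfold gB; linarith

lemma gB_pos (k : ℕ) : 0 < gB k := lt_trans (by positivity) (gB_lb k)

lemma uB_lb (k : ℕ) : (k : ℝ) + 1/2 < uB k := by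
  have h1 : (0:ℝ) < 16*(k : ℝ)^2+16*(k : ℝ)+29 := by positivity
  have h2 : (0:ℝ) < (8*(k : ℝ)+4)*(16*(k : ℝ)^2+16*(k : ℝ)+38) := by positivity
  have : 0 < (16*(k : ℝ)^2+16*(k : ℝ)+29)/((8*(k : ℝ)+4)*(16*(k : ℝ)^2+16*(k : ℝ)+38)) :=
    div_pos h1 h2
  unfold uB; linarith

lemma uB_ub (k : ℕ) : uB k ≤ (k : ℝ) + 1 := by
  have h2 : (0:ℝ) < (8*(k : ℝ)+4)*(16*(k : ℝ)^2+16*(k : ℝ)+38) := by positivity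
  have hk : (0:ℝ) ≤ (k : ℝ) := Nat.cast_nonneg k
  have : (16*(k : ℝ)^2+16*(k : ℝ)+29)/((8*(k : ℝ)+4)*(16*(k : ℝ)^2+16*(k : ℝ)+38)) ≤ 1/2 := by
    rw [div_le_div_iff₀ h2 (by norm_num : (0:ℝ) < 2)]
    nlinarith [sq_nonneg ((k:ℝ)), hk]
  unfold uB; linarith

lemma uB_pos (k : ℕ) : 0 < uB k := lt_trans (by positivity) (uB_lb k)

lemma cstar_pos : ∀ k, 0 < cstar k := by
  intro k
  induction k with
  | zero => exact div_pos (by norm_num) Real.pi_pos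
  | succ n ih =>
      show 0 < ((n : ℝ) + 1) ^ 2 / cstar n
      positivity

lemma cstar_succ (k : ℕ) : cstar (k+1) = ((k : ℝ)+1)^2 / cstar k := rfl

lemma cstar_two_step (k : ℕ) :
    cstar (k+2) = ((k : ℝ)+2)^2 * cstar k / ((k : ℝ)+1)^2 := by
  have h1 : cstar (k+2) = ((k : ℝ)+2)^2 / cstar (k+1) := by
    have := cstar_succ (k+1)
    rw [this]; push_cast; ring_nf
  rw [h1, cstar_succ k]
  have hc : cstar k ≠ 0 := ne_of_gt (cstar_pos k)
  have hk1 : ((k : ℝ)+1)^2 ≠ 0 := by positivity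
  field_simp

/-- `cstar (2m)` in terms of the Wallis partial products. -/
lemma cstar_even (m : ℕ) :
    cstar (2*m) = (2/π) * (2*(m : ℝ)+1) * Real.Wallis.W m := by
  induction m with
  | zero => simp [Real.Wallis.W, cstar]
  | succ n ih =>
      have h2 : 2*(n+1) = (2*n) + 2 := by ring
      rw [h2, cstar_two_step, ih, Real.Wallis.W_succ]
      have hπ : (π:ℝ) ≠ 0 := ne_of_gt Real.pi_pos
      have h1 : (2*(n:ℝ)+1) ≠ 0 := by positivity
      have h3 : (2*(n:ℝ)+3) ≠ 0 := by positivity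
      have h4 : ((2*n : ℕ) : ℝ) = 2*(n:ℝ) := by push_cast; ring
      rw [h4]
      push_cast
      field_simp
      ring

lemma t_tendsto :
    Tendsto (fun m => cstar (2*m) / (2*(m : ℝ)+1)) atTop (𝓝 1) := by
  have h : ∀ m : ℕ, cstar (2*m) / (2*(m : ℝ)+1) = (2/π) * Real.Wallis.W m := by
    intro m
    rw [cstar_even]
    have h1 : (2*(m:ℝ)+1) ≠ 0 := by positivity
    field_simp
  simp only [h]
  have := (Real.Wallis.tendsto_W_nhds_pi_div_two).const_mul (2/π)
  have hπ : (π:ℝ) ≠ 0 := ne_of_gt Real.pi_pos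
  have h2 : (2/π) * (π/2) = 1 := by field_simp
  rwa [h2] at this

lemma inv_tendsto_zero (a b : ℝ) (ha : 0 < a) :
    Tendsto (fun m : ℕ => (a*(m:ℝ)+b)⁻¹) atTop (𝓝 0) := by
  apply Tendsto.inv_tendsto_atTop
  apply Filter.tendsto_atTop_add_const_right
  exact (tendsto_natCast_atTop_atTop).const_mul_atTop ha

/-- Generic limit along even indices. -/
lemma ratio_even_tendsto (B : ℕ → ℝ) (hlb : ∀ k : ℕ, (k : ℝ) + 1/2 < B k)
    (hub : ∀ k : ℕ, B k ≤ (k : ℝ) + 1) :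
    Tendsto (fun m => cstar (2*m) / B (2*m)) atTop (𝓝 1) := by
  have hBpos : ∀ k, 0 < B k := fun k => lt_trans (by positivity) (hlb k)
  have key : ∀ m : ℕ, cstar (2*m) / B (2*m)
      = (cstar (2*m) / (2*(m : ℝ)+1)) * ((2*(m : ℝ)+1) / B (2*m)) := by
    intro m
    have h1 : (2*(m:ℝ)+1) ≠ 0 := by positivity
    have h2 : B (2*m) ≠ 0 := ne_of_gt (hBpos (2*m))
    field_simp
  simp only [key]
  have hfac : Tendsto (fun m : ℕ => (2*(m : ℝ)+1) / B (2*m)) atTop (𝓝 1) := by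
    apply tendsto_of_tendsto_of_tendsto_of_le_of_le
      (g := fun _ : ℕ => (1:ℝ))
      (h := fun m : ℕ => 1 + (1/2) * (2*(m:ℝ)+1/2)⁻¹)
    · exact tendsto_const_nhds
    · have := (inv_tendsto_zero 2 (1/2) (by norm_num)).const_mul (1/2)
      have h := tendsto_const_nhds (x := (1:ℝ)) (f := atTop (α := ℕ)) |>.add this
      simpa using h
    · intro m
      show (1:ℝ) ≤ (2*(m:ℝ)+1) / B (2*m)
      rw [le_div_iff₀ (hBpos (2*m))]
      have := hub (2*m)
      have hc : ((2*m : ℕ) : ℝ) = 2*(m:ℝ) := by push_cast; ring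
      rw [hc] at this
      linarith
    · intro m
      show (2*(m:ℝ)+1) / B (2*m) ≤ 1 + (1/2) * (2*(m:ℝ)+1/2)⁻¹
      have hB := hlb (2*m)
      have hc : ((2*m : ℕ) : ℝ) = 2*(m:ℝ) := by push_cast; ring
      rw [hc] at hB
      have hpos : (0:ℝ) < 2*(m:ℝ)+1/2 := by positivity
      have expand : (1 + (1/2) * (2*(m:ℝ)+1/2)⁻¹) = (2*(m:ℝ)+1)/(2*(m:ℝ)+1/2) := by
        field_simp; ring
      rw [expand, div_le_div_iff₀ (hBpos (2*m)) hpos]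
      nlinarith [hBpos (2*m)]
  have := t_tendsto.mul hfac
  simpa using this

/-- Generic limit along odd indices. -/
lemma ratio_odd_tendsto (B : ℕ → ℝ) (hlb : ∀ k : ℕ, (k : ℝ) + 1/2 < B k)
    (hub : ∀ k : ℕ, B k ≤ (k : ℝ) + 1) :
    Tendsto (fun m => cstar (2*m+1) / B (2*m+1)) atTop (𝓝 1) := by
  have hBpos : ∀ k, 0 < B k := fun k => lt_trans (by positivity) (hlb k)
  have key : ∀ m : ℕ, cstar (2*m+1) / B (2*m+1)
      = (cstar (2*m) / (2*(m : ℝ)+1))⁻¹ * ((2*(m : ℝ)+1) / B (2*m+1)) := by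
    intro m
    have h1 : cstar (2*m+1) = (2*(m:ℝ)+1)^2 / cstar (2*m) := by
      have := cstar_succ (2*m)
      rw [this]
      have hc : ((2*m : ℕ) : ℝ) = 2*(m:ℝ) := by push_cast; ring
      rw [hc]
    have h2 : (2*(m:ℝ)+1) ≠ 0 := by positivity
    have h3 : cstar (2*m) ≠ 0 := ne_of_gt (cstar_pos (2*m))
    have h4 : B (2*m+1) ≠ 0 := ne_of_gt (hBpos (2*m+1))
    rw [h1]
    field_simp
  simp only [key]
  have hfac : Tendsto (fun m : ℕ => (2*(m : ℝ)+1) / B (2*m+1)) atTop (𝓝 1) := by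
    apply tendsto_of_tendsto_of_tendsto_of_le_of_le
      (g := fun m : ℕ => 1 - (2*(m:ℝ)+2)⁻¹)
      (h := fun _ : ℕ => (1:ℝ))
    · have := inv_tendsto_zero 2 2 (by norm_num)
      have h := tendsto_const_nhds (x := (1:ℝ)) (f := atTop (α := ℕ)) |>.sub this
      simpa using h
    · exact tendsto_const_nhds
    · intro m
      show 1 - (2*(m:ℝ)+2)⁻¹ ≤ (2*(m:ℝ)+1) / B (2*m+1)
      have hB := hub (2*m+1)
      have hc : ((2*m+1 : ℕ) : ℝ) = 2*(m:ℝ)+1 := by push_cast; ring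
      rw [hc] at hB
      have hpos : (0:ℝ) < 2*(m:ℝ)+2 := by positivity
      have expand : (1 - (2*(m:ℝ)+2)⁻¹) = (2*(m:ℝ)+1)/(2*(m:ℝ)+2) := by
        field_simp; ring
      rw [expand, div_le_div_iff₀ hpos (hBpos (2*m+1))]
      nlinarith [hBpos (2*m+1)]
    · intro m
      show (2*(m:ℝ)+1) / B (2*m+1) ≤ 1
      have hB := hlb (2*m+1)
      have hc : ((2*m+1 : ℕ) : ℝ) = 2*(m:ℝ)+1 := by push_cast; ring
      rw [hc] at hB
      rw [div_le_one (hBpos (2*m+1))]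
      linarith
  have ht : Tendsto (fun m : ℕ => (cstar (2*m) / (2*(m : ℝ)+1))⁻¹) atTop (𝓝 1) := by
    have := t_tendsto.inv₀ (by norm_num)
    simpa using this
  have := ht.mul hfac
  simpa using this

/-- Core monotone-subsequence argument. -/
lemma core (q : ℕ → ℝ) (hmono : ∀ k, q (k+2) < q k)
    (he : Tendsto (fun m => q (2*m)) atTop (𝓝 1))
    (ho : Tendsto (fun m => q (2*m+1)) atTop (𝓝 1)) :
    ∀ k, 1 < q k := by
  have hstep : ∀ n m : ℕ, q (n + 2*m) ≤ q n := by
    intro n m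
    induction m with
    | zero => simp
    | succ j ih =>
        have : q (n + 2*(j+1)) < q (n + 2*j) := by
          have := hmono (n + 2*j)
          have he' : n + 2*(j+1) = (n + 2*j) + 2 := by ring
          rwa [he']
        linarith
  intro k
  -- limit of m ↦ q (k+2+2m) is 1
  have hlim : Tendsto (fun m => q ((k+2) + 2*m)) atTop (𝓝 1) := by
    rcases Nat.even_or_odd k with ⟨j, hj⟩ | ⟨j, hj⟩
    · -- k = 2j, k+2+2m = 2(j+1+m)
      have hcomp : (fun m => q ((k+2) + 2*m)) = (fun m => q (2*m)) ∘ (fun m => m+(j+1)) := by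
        funext m; simp only [Function.comp_apply]; congr 1; omega
      rw [hcomp]
      exact he.comp (tendsto_add_atTop_nat (j+1))
    · -- k = 2j+1, k+2+2m = 2(j+1+m)+1
      have hcomp : (fun m => q ((k+2) + 2*m)) = (fun m => q (2*m+1)) ∘ (fun m => m+(j+1)) := by
        funext m; simp only [Function.comp_apply]; congr 1; omega
      rw [hcomp]
      exact ho.comp (tendsto_add_atTop_nat (j+1))
  have h1 : 1 ≤ q (k+2) := le_of_tendsto' hlim (fun m => hstep (k+2) m)
  have := hmono k
  linarith

/-- Polynomial inequality for the lower bound sequence. -/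
lemma Pg_ineq (k : ℕ) : ((k : ℝ)+2)^2 * gB k < ((k : ℝ)+1)^2 * gB (k+2) := by
  have hk : (0:ℝ) ≤ (k : ℝ) := Nat.cast_nonneg k
  have hc : ((k+2 : ℕ) : ℝ) = (k : ℝ) + 2 := by push_cast; ring
  have h1 : (0:ℝ) < 8*(k:ℝ)+8 := by positivity
  have h2 : (0:ℝ) < 8*((k:ℝ)+2)+8 := by positivity
  have key : ((k : ℝ)+1)^2 * gB (k+2) - ((k : ℝ)+2)^2 * gB k
      = (24*(k:ℝ)+8)/((8*(k:ℝ)+8)*(8*((k:ℝ)+2)+8)) := by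
    unfold gB
    rw [hc]
    field_simp
    ring
  have hpos : (0:ℝ) < (24*(k:ℝ)+8)/((8*(k:ℝ)+8)*(8*((k:ℝ)+2)+8)) := by positivity
  linarith [key, hpos]

/-- Polynomial inequality for the upper bound sequence. -/
lemma Pu_ineq (k : ℕ) : ((k : ℝ)+1)^2 * uB (k+2) < ((k : ℝ)+2)^2 * uB k := by
  have hk : (0:ℝ) ≤ (k : ℝ) := Nat.cast_nonneg k
  have hc : ((k+2 : ℕ) : ℝ) = (k : ℝ) + 2 := by push_cast; ring
  have h1 : (0:ℝ) < (8*(k:ℝ)+4)*(16*(k:ℝ)^2+16*(k:ℝ)+38) := by positivity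
  have h2 : (0:ℝ) < (8*((k:ℝ)+2)+4)*(16*((k:ℝ)+2)^2+16*((k:ℝ)+2)+38) := by positivity
  have key : ((k : ℝ)+2)^2 * uB k - ((k : ℝ)+1)^2 * uB (k+2)
      = 88200/(((8*(k:ℝ)+4)*(16*(k:ℝ)^2+16*(k:ℝ)+38))
          *((8*((k:ℝ)+2)+4)*(16*((k:ℝ)+2)^2+16*((k:ℝ)+2)+38))) := by
    unfold uB
    rw [hc]
    field_simp
    ring
  have hpos : (0:ℝ) < (88200:ℝ)/(((8*(k:ℝ)+4)*(16*(k:ℝ)^2+16*(k:ℝ)+38))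
          *((8*((k:ℝ)+2)+4)*(16*((k:ℝ)+2)^2+16*((k:ℝ)+2)+38))) := by positivity
  linarith [key, hpos]

lemma gB_lt_cstar (k : ℕ) : gB k < cstar k := by
  have h := core (fun k => cstar k / gB k) ?_ ?_ ?_ k
  · rw [lt_div_iff₀ (gB_pos k), one_mul] at h
    exact h
  · intro j
    rw [div_lt_div_iff₀ (gB_pos (j+2)) (gB_pos j), cstar_two_step j]
    have hc := cstar_pos j
    have hj1 : (0:ℝ) < ((j:ℝ)+1)^2 := by positivity
    rw [div_mul_eq_mul_div, div_lt_iff₀ hj1]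
    have := Pg_ineq j
    nlinarith [this, hc]
  · exact ratio_even_tendsto gB gB_lb gB_ub
  · exact ratio_odd_tendsto gB gB_lb gB_ub

lemma cstar_lt_uB (k : ℕ) : cstar k < uB k := by
  have h := core (fun k => uB k / cstar k) ?_ ?_ ?_ k
  · rw [lt_div_iff₀ (cstar_pos k), one_mul] at h
    exact h
  · intro j
    rw [div_lt_div_iff₀ (cstar_pos (j+2)) (cstar_pos j), cstar_two_step j]
    have hc := cstar_pos j
    have hj1 : (0:ℝ) < ((j:ℝ)+1)^2 := by positivity
    have hPu := Pu_ineq j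
    have hr : uB j * (((j:ℝ)+2)^2 * cstar j / ((j:ℝ)+1)^2)
        = (uB j * ((j:ℝ)+2)^2 * cstar j) / ((j:ℝ)+1)^2 := by ring
    rw [hr, lt_div_iff₀ hj1]
    nlinarith [hPu, hc]
  · have he := ratio_even_tendsto uB uB_lb uB_ub
    have h2 : (fun m => uB (2*m) / cstar (2*m))
        = fun m => (cstar (2*m) / uB (2*m))⁻¹ := by
      funext m
      rw [inv_div]
    rw [h2]
    have := he.inv₀ (by norm_num)
    simpa using this
  · have ho := ratio_odd_tendsto uB uB_lb uB_ub
    have h2 : (fun m => uB (2*m+1) / cstar (2*m+1))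
        = fun m => (cstar (2*m+1) / uB (2*m+1))⁻¹ := by
      funext m
      rw [inv_div]
    rw [h2]
    have := ho.inv₀ (by norm_num)
    simpa using this

/-- Key product bound, `k ≥ 1` case. -/
lemma uB_prod (k : ℕ) (hk1 : 1 ≤ k) : uB k * (uB k - (k:ℝ) - 1/2) ≤ 1/8 := by
  have hk : (1:ℝ) ≤ (k : ℝ) := by exact_mod_cast hk1
  have h1 : (0:ℝ) < (8*(k:ℝ)+4)*(16*(k:ℝ)^2+16*(k:ℝ)+38) := by positivity
  have key : (1:ℝ)/8 - uB k * (uB k - (k:ℝ) - 1/2)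
      = (896*(k:ℝ)^4+1792*(k:ℝ)^3+2992*(k:ℝ)^2+2096*(k:ℝ)-157)
        /(((8*(k:ℝ)+4)*(16*(k:ℝ)^2+16*(k:ℝ)+38))^2) := by
    unfold uB
    field_simp
    ring
  have hnum : (0:ℝ) ≤ 896*(k:ℝ)^4+1792*(k:ℝ)^3+2992*(k:ℝ)^2+2096*(k:ℝ)-157 := by
    nlinarith [sq_nonneg ((k:ℝ)), pow_nonneg (le_trans zero_le_one hk) 3,
      pow_nonneg (le_trans zero_le_one hk) 4]
  have : (0:ℝ) ≤ (896*(k:ℝ)^4+1792*(k:ℝ)^3+2992*(k:ℝ)^2+2096*(k:ℝ)-157)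
        /(((8*(k:ℝ)+4)*(16*(k:ℝ)^2+16*(k:ℝ)+38))^2) := by positivity
  linarith [key, this]

end CstarAux

open CstarAux in
/-- Refined bounds on the constants c_k^*. -/
theorem cstar_refined_bounds (k : ℕ) :
    1 / (8 * ((k : ℝ) + 1)) < cstar k - (k : ℝ) - 1 / 2 ∧
    cstar k - (k : ℝ) - 1 / 2 < 1 / (8 * cstar k) ∧
    1 / (8 * cstar k) < 1 / (8 * ((k : ℝ) + 1 / 2)) := by
  have hk : (0:ℝ) ≤ (k : ℝ) := Nat.cast_nonneg k
  have hg := gB_lt_cstar k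
  have hu := cstar_lt_uB k
  have hc := cstar_pos k
  have hhalf : (k:ℝ) + 1/2 < cstar k := lt_trans (gB_lb k) hg
  refine ⟨?_, ?_, ?_⟩
  · -- lower bound
    have h8 : (8 * ((k : ℝ) + 1)) = 8*(k:ℝ)+8 := by ring
    rw [h8]
    have : gB k = (k : ℝ) + 1/2 + 1/(8*(k : ℝ)+8) := rfl
    linarith [hg, this.symm.le]
  · -- middle bound
    rcases Nat.eq_zero_or_pos k with h0 | h1
    · subst h0
      have hc0 : cstar 0 = 2/π := rfl
      have hπ : (0:ℝ) < π := Real.pi_pos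
      have hπgt : (3.141592:ℝ) < π := Real.pi_gt_d6
      rw [hc0]
      have hrw : (1:ℝ) / (8 * (2/π)) = π/16 := by
        rw [show (8:ℝ) * (2/π) = 16/π by ring, one_div_div]
      rw [hrw]
      have hkey : 2/π < π/16 + 1/2 := by
        rw [div_lt_iff₀ hπ]
        nlinarith [hπgt]
      push_cast
      linarith
    · -- k ≥ 1
      have hprod := uB_prod k h1
      have hmono : cstar k * (cstar k - (k:ℝ) - 1/2) < uB k * (uB k - (k:ℝ) - 1/2) := by
        nlinarith [hu, hhalf, hc]
      have h18 : cstar k * (cstar k - (k:ℝ) - 1/2) < 1/8 := lt_of_lt_of_le hmono hprod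
      rw [lt_div_iff₀ (by positivity : (0:ℝ) < 8 * cstar k)]
      nlinarith [h18]
  · -- third bound
    apply div_lt_div_of_pos_left one_pos (by positivity)
    nlinarith [hhalf]
end

section
/- For every even integer k ≥ 2, one has √(c_k*) = √(2/π)·2^k / C(k, k/2), where C(k, k/2) is the central binomial coefficient, and the quantity √π · C(k, k/2) · 2^{−(k+1/2)} · √(k + 1/2), which equals √((k + 1/2)/c_k*), lies in the closed interval [1 − 1/(16(k + 1/2)²), 1]. -/
open MeasureTheory Real

section Aux
open Filter Nat Topology

noncomputable def aseq (n : ℕ) : ℝ := (Nat.centralBinom n : ℝ) / 4 ^ n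

lemma aseq_pos (n : ℕ) : 0 < aseq n := by
  have := Nat.centralBinom_pos n
  unfold aseq
  positivity

lemma aseq_succ (n : ℕ) : aseq (n + 1) = aseq n * ((2 * n + 1) / (2 * (n + 1))) := by
  have h := Nat.succ_mul_centralBinom_succ n
  have h' : ((n : ℝ) + 1) * (Nat.centralBinom (n + 1) : ℝ)
      = 2 * (2 * n + 1) * (Nat.centralBinom n : ℝ) := by exact_mod_cast h
  unfold aseq
  have h4 : (4 : ℝ) ^ (n + 1) = 4 ^ n * 4 := by ring
  rw [h4]
  field_simp
  nlinarith [h', pow_pos (show (0:ℝ) < 4 by norm_num) n]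

lemma cstar_pos (n : ℕ) : 0 < cstar n := by
  induction n with
  | zero =>
    have := Real.pi_pos
    unfold cstar; positivity
  | succ k ih =>
    unfold cstar
    positivity

lemma cstar_succ (n : ℕ) : cstar (n + 1) = ((n : ℝ) + 1) ^ 2 / cstar n := rfl

lemma cstar_two_mul (m : ℕ) :
    cstar (2 * m) = 2 * 16 ^ m / (Real.pi * (Nat.centralBinom m : ℝ) ^ 2) := by
  induction m with
  | zero => simp [cstar]
  | succ m ih =>
    have hpi := Real.pi_pos
    have hc := Nat.centralBinom_pos m
    have hcR : (0:ℝ) < (Nat.centralBinom m : ℝ) := by exact_mod_cast hc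
    have hcs := cstar_pos (2 * m)
    have h1 : 2 * (m + 1) = (2 * m + 1) + 1 := by ring
    rw [h1, cstar_succ, cstar_succ, ih]
    have h := Nat.succ_mul_centralBinom_succ m
    have h' : ((m : ℝ) + 1) * (Nat.centralBinom (m + 1) : ℝ)
        = 2 * (2 * m + 1) * (Nat.centralBinom m : ℝ) := by exact_mod_cast h
    have hc1 : (0:ℝ) < (Nat.centralBinom (m+1) : ℝ) := by
      exact_mod_cast Nat.centralBinom_pos (m+1)
    have h16 : (0:ℝ) < 16 ^ m := by positivity
    push_cast
    field_simp
    linear_combination (4 * (16:ℝ) ^ m *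
      (((m:ℝ) + 1) * (Nat.centralBinom (m+1) : ℝ) + 2 * (2 * (m:ℝ) + 1) * (Nat.centralBinom m : ℝ))) * h'

noncomputable def fseq (n : ℕ) : ℝ := Real.pi * ((n : ℝ) + 1/4) * aseq n ^ 2

lemma W_mul (n : ℕ) : Real.Wallis.W n * ((2 * (n : ℝ) + 1) * aseq n ^ 2) = 1 := by
  have keyN := Nat.choose_mul_factorial_mul_factorial (show n ≤ 2 * n by omega)
  rw [show 2 * n - n = n from by omega] at keyN
  rw [← Nat.centralBinom_eq_two_mul_choose] at keyN
  have key : (Nat.centralBinom n : ℝ) * (n ! : ℝ) * (n ! : ℝ) = ((2 * n)! : ℝ) := by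
    exact_mod_cast keyN
  rw [Real.Wallis.W_eq_factorial_ratio]
  have h2 : (2:ℝ) ^ (4 * n) = 16 ^ n := by rw [pow_mul]; norm_num
  have hf : (0:ℝ) < (n ! : ℝ) := by exact_mod_cast Nat.factorial_pos n
  have hf2 : (0:ℝ) < ((2 * n)! : ℝ) := by exact_mod_cast Nat.factorial_pos (2 * n)
  unfold aseq
  have h4 : ((4:ℝ) ^ n) ^ 2 = 16 ^ n := by rw [← pow_mul, pow_mul']; norm_num
  field_simp
  rw [h2, h4]
  linear_combination (16 ^ n *
    ((Nat.centralBinom n : ℝ) * (n ! : ℝ) * (n ! : ℝ) + ((2 * n)! : ℝ))) * key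

noncomputable def pseq (n : ℕ) : ℝ := Real.pi * ((n : ℝ) + 1/2) * aseq n ^ 2

lemma pseq_eq (n : ℕ) : pseq n = π / 2 * (Real.Wallis.W n)⁻¹ := by
  have h := W_mul n
  have hW := Real.Wallis.W_pos n
  rw [inv_eq_of_mul_eq_one_right h]
  unfold pseq
  ring

lemma tendsto_pseq : Tendsto pseq atTop (𝓝 1) := by
  have h := Real.Wallis.tendsto_W_nhds_pi_div_two
  have hne : (π / 2) ≠ 0 := by positivity
  have h2 := (h.inv₀ hne).const_mul (π / 2)
  rw [mul_inv_cancel₀ hne] at h2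
  exact (Filter.Tendsto.congr (fun n => (pseq_eq n).symm) h2)

lemma tendsto_aseq_sq : Tendsto (fun n => aseq n ^ 2) atTop (𝓝 0) := by
  have h1 : Tendsto (fun n : ℕ => Real.pi * ((n : ℝ) + 1/2)) atTop atTop := by
    apply Filter.Tendsto.const_mul_atTop Real.pi_pos
    exact tendsto_atTop_add_const_right _ _ tendsto_natCast_atTop_atTop
  have h2 : Tendsto (fun n : ℕ => (Real.pi * ((n : ℝ) + 1/2))⁻¹) atTop (𝓝 0) :=
    h1.inv_tendsto_atTop
  have h3 := tendsto_pseq.mul h2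
  rw [mul_zero] at h3
  apply h3.congr
  intro n
  have hne : Real.pi * ((n : ℝ) + 1/2) ≠ 0 := by positivity
  unfold pseq
  field_simp

lemma tendsto_fseq : Tendsto fseq atTop (𝓝 1) := by
  have h := tendsto_pseq.sub (tendsto_aseq_sq.const_mul (π / 4))
  rw [mul_zero, sub_zero] at h
  apply h.congr
  intro n
  unfold pseq fseq
  ring

noncomputable def eps (n : ℕ) : ℝ := 1 / (64 * ((n : ℝ) + 1/4) ^ 2)

lemma eps_lt (n : ℕ) : eps n ≤ 1/4 := by
  unfold eps
  rw [div_le_div_iff₀ (by positivity) (by norm_num)]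
  nlinarith [Nat.cast_nonneg (α := ℝ) n]

lemma tendsto_eps : Tendsto eps atTop (𝓝 0) := by
  have h1 : Tendsto (fun n : ℕ => 64 * ((n : ℝ) + 1/4) ^ 2) atTop atTop := by
    apply tendsto_atTop_mono (fun n => ?_) tendsto_natCast_atTop_atTop
    nlinarith [Nat.cast_nonneg (α := ℝ) n]
  exact Filter.Tendsto.congr (fun n => by simp [eps, one_div]) h1.inv_tendsto_atTop

noncomputable def gseq (n : ℕ) : ℝ := fseq n / (1 - eps n) ^ 2

lemma tendsto_gseq : Tendsto gseq atTop (𝓝 1) := by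
  have h1 : Tendsto (fun n => (1 - eps n) ^ 2) atTop (𝓝 1) := by
    have h0 : Tendsto (fun n : ℕ => (1:ℝ) - eps n) atTop (𝓝 (1 - 0)) :=
      tendsto_const_nhds.sub tendsto_eps
    have := h0.pow 2
    norm_num at this
    exact this
  have h := tendsto_fseq.div h1 one_ne_zero
  exact (by simpa using h : Tendsto (fseq / fun n => (1 - eps n) ^ 2) atTop (𝓝 1))

lemma step1 (x a : ℝ) (hx : 0 ≤ x) (ha : 0 < a) :
    Real.pi * (x + 1/4) * a ^ 2 ≤
      Real.pi * (x + 1 + 1/4) * (a ^ 2 * ((2*x+1)^2 / (2*(x+1))^2)) := by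
  have hπ := Real.pi_pos
  have hd : (0:ℝ) < (2*(x+1))^2 := by positivity
  have e : Real.pi * (x + 1 + 1/4) * (a ^ 2 * ((2*x+1)^2 / (2*(x+1))^2))
      - Real.pi * (x + 1/4) * a ^ 2 = Real.pi * a^2 * (1/4) / (2*(x+1))^2 := by
    field_simp
    ring
  nlinarith [div_nonneg (le_of_lt (by positivity :
    (0:ℝ) < Real.pi * a^2 * (1/4))) hd.le]

lemma fseq_mono : Monotone fseq := by
  apply monotone_nat_of_le_succ
  intro n
  unfold fseq
  rw [aseq_succ]
  have h := step1 (n : ℝ) (aseq n) (Nat.cast_nonneg n) (aseq_pos n)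
  calc Real.pi * ((n:ℝ) + 1/4) * aseq n ^ 2
      ≤ Real.pi * ((n:ℝ) + 1 + 1/4) * (aseq n ^ 2 * ((2*(n:ℝ)+1)^2 / (2*((n:ℝ)+1))^2)) := h
    _ = Real.pi * ((↑(n+1):ℝ) + 1/4) * (aseq n * ((2*(n:ℕ) + 1) / (2*((n:ℕ) + 1)))) ^ 2 := by
        have hne : ((n:ℝ)+1) ≠ 0 := by positivity
        push_cast
        field_simp

lemma fseq_le_one (n : ℕ) : fseq n ≤ 1 := fseq_mono.ge_of_tendsto tendsto_fseq n

set_option maxHeartbeats 2000000 in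
lemma step2 (x a : ℝ) (hx : 0 ≤ x) (ha : 0 < a) :
    Real.pi * (x + 1 + 1/4) * (a ^ 2 * ((2*x+1)^2 / (2*(x+1))^2)) * (1 - 1/(64*(x+1/4)^2))^2 ≤
      Real.pi * (x + 1/4) * a ^ 2 * (1 - 1/(64*(x+1+1/4)^2))^2 := by
  have hπ := Real.pi_pos
  have hQ : (0:ℝ) < 4*(x+1)^2 * (64*(x+1/4)^2)^2 * (64*(x+1+1/4)^2)^2 := by positivity
  have e : (Real.pi * (x + 1/4) * a ^ 2 * (1 - 1/(64*(x+1+1/4)^2))^2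
      - Real.pi * (x + 1 + 1/4) * (a ^ 2 * ((2*x+1)^2 / (2*(x+1))^2)) * (1 - 1/(64*(x+1/4)^2))^2)
      * (4*(x+1)^2 * (64*(x+1/4)^2)^2 * (64*(x+1+1/4)^2)^2)
      = Real.pi * a^2 * (44316 + 656832*x + 3513728*x^2 + 8745984*x^3 + 10656768*x^4
          + 6193152*x^5 + 1376256*x^6) := by
    field_simp
    ring
  have hP : (0:ℝ) ≤ Real.pi * a^2 * (44316 + 656832*x + 3513728*x^2 + 8745984*x^3
      + 10656768*x^4 + 6193152*x^5 + 1376256*x^6) := by positivity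
  nlinarith [e, hP, hQ]

lemma one_le_gseq (n : ℕ) : 1 ≤ gseq n := by
  have anti : Antitone gseq := by
    apply antitone_nat_of_succ_le
    intro n
    have ha := aseq_pos n
    have hx : (0:ℝ) ≤ (n : ℝ) := Nat.cast_nonneg n
    have h1 : (0:ℝ) < 1 - eps n := by
      linarith [eps_lt n, show (0:ℝ) < eps n from by unfold eps; positivity]
    have h2 : (0:ℝ) < 1 - eps (n+1) := by
      linarith [eps_lt (n+1), show (0:ℝ) < eps (n+1) from by unfold eps; positivity]
    unfold gseq
    rw [div_le_div_iff₀ (by positivity) (by positivity)]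
    have h := step2 (n : ℝ) (aseq n) hx ha
    have hne : ((n:ℝ)+1) ≠ 0 := by positivity
    calc fseq (n+1) * (1 - eps n)^2
        = Real.pi * ((n:ℝ) + 1 + 1/4) * (aseq n ^ 2 * ((2*(n:ℝ)+1)^2 / (2*((n:ℝ)+1))^2)) *
            (1 - 1/(64*((n:ℝ)+1/4)^2))^2 := by
          unfold fseq eps
          rw [aseq_succ]
          have h64 : (64*((n:ℝ)+1/4)^2) ≠ 0 := by positivity
          push_cast
          field_simp
      _ ≤ Real.pi * ((n:ℝ) + 1/4) * aseq n ^ 2 * (1 - 1/(64*((n:ℝ)+1+1/4)^2))^2 := h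
      _ = fseq n * (1 - eps (n+1))^2 := by
          unfold fseq eps
          push_cast
          ring
  exact anti.le_of_tendsto tendsto_gseq n

end Aux

/-- For even k ≥ 2, √(c_k^*) = √(2/π)·2^k / C(k, k/2), and
√π·C(k,k/2)·2^{-(k+1/2)}·√(k+1/2) = √π·C(k,k/2)·2^{-(k+1/2)}·√(k+1/2) ∈ [1 - 1/(16(k+1/2)²), 1]. -/
theorem cstar_central_binomial (k : ℕ) (hk : 2 ≤ k) (hke : Even k) :
    Real.sqrt (cstar k) = Real.sqrt (2 / Real.pi) * 2 ^ k / (k.choose (k / 2) : ℝ) ∧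
    Real.sqrt Real.pi * (k.choose (k / 2) : ℝ) * (2 : ℝ) ^ (-((k : ℝ) + 1 / 2)) *
        Real.sqrt ((k : ℝ) + 1 / 2) =
      Real.sqrt (((k : ℝ) + 1 / 2) / cstar k) ∧
    Real.sqrt (((k : ℝ) + 1 / 2) / cstar k) ∈
      Set.Icc (1 - 1 / (16 * ((k : ℝ) + 1 / 2) ^ 2)) 1 := by
  obtain ⟨m, rfl⟩ := hke
  have hπ := Real.pi_pos
  have hC : (0:ℝ) < (Nat.centralBinom m : ℝ) := by exact_mod_cast Nat.centralBinom_pos m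
  have hchoose : ((m + m).choose ((m + m) / 2) : ℝ) = (Nat.centralBinom m : ℝ) := by
    rw [show (m + m) / 2 = m from by omega, Nat.centralBinom_eq_two_mul_choose, two_mul]
  have hcs : cstar (m + m) = 2 * 16 ^ m / (Real.pi * (Nat.centralBinom m : ℝ) ^ 2) := by
    rw [← two_mul]; exact cstar_two_mul m
  have hkr : ((m + m : ℕ) : ℝ) = 2 * (m : ℝ) := by push_cast; ring
  have hpow : ((2:ℝ) ^ (m + m)) ^ 2 = 16 ^ m := by
    rw [← pow_mul, show (m + m) * 2 = 4 * m from by ring, pow_mul]; norm_num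
  have h16 : ((4:ℝ) ^ m) ^ 2 = 16 ^ m := by
    rw [← pow_mul, show m * 2 = 2 * m from by ring, pow_mul]; norm_num
  -- part 1
  have part1 : Real.sqrt (cstar (m + m)) =
      Real.sqrt (2 / Real.pi) * 2 ^ (m + m) / ((m + m).choose ((m + m) / 2) : ℝ) := by
    rw [hchoose]
    have e1 : cstar (m + m) = (Real.sqrt (2 / Real.pi) * 2 ^ (m + m) /
        (Nat.centralBinom m : ℝ)) ^ 2 := by
      rw [hcs, div_pow, mul_pow, Real.sq_sqrt (by positivity), hpow]
      field_simp
    rw [e1, Real.sqrt_sq (by positivity)]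
  refine ⟨part1, ?_, ?_, ?_⟩
  -- part 2
  · set L := Real.sqrt Real.pi * ((m + m).choose ((m + m) / 2) : ℝ) *
        (2 : ℝ) ^ (-(((m + m : ℕ) : ℝ) + 1 / 2)) * Real.sqrt (((m + m : ℕ) : ℝ) + 1 / 2) with hL
    have hLpos : 0 ≤ L := by
      rw [hL]
      have := Real.rpow_nonneg (show (0:ℝ) ≤ 2 by norm_num) (-(((m + m : ℕ) : ℝ) + 1 / 2))
      positivity
    have hr : ((2:ℝ) ^ (-(((m + m : ℕ) : ℝ) + 1/2))) ^ 2 = 1 / (2 * 16 ^ m) := by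
      rw [pow_two, ← Real.rpow_add (by norm_num : (0:ℝ) < 2)]
      rw [show -(((m + m : ℕ) : ℝ) + 1/2) + -(((m + m : ℕ) : ℝ) + 1/2)
          = -(((4 * m + 1 : ℕ) : ℝ)) from by push_cast; ring]
      rw [Real.rpow_neg (by norm_num : (0:ℝ) ≤ 2), Real.rpow_natCast]
      rw [show (4 * m + 1) = (4 * m) + 1 from rfl, pow_succ, pow_mul]
      norm_num
      ring
    have e2 : (((m + m : ℕ) : ℝ) + 1 / 2) / cstar (m + m) = L ^ 2 := by
      have expand : L ^ 2 = (Real.sqrt Real.pi) ^ 2 * ((m + m).choose ((m + m) / 2) : ℝ) ^ 2 *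
          (((2:ℝ) ^ (-(((m + m : ℕ) : ℝ) + 1/2))) ^ 2) *
          (Real.sqrt (((m + m : ℕ) : ℝ) + 1 / 2)) ^ 2 := by rw [hL]; ring
      rw [expand, Real.sq_sqrt hπ.le, Real.sq_sqrt (by positivity), hr, hchoose, hcs]
      field_simp
    rw [e2, Real.sqrt_sq hLpos]
  -- part 3
  · -- lower bound
    have e3 : (((m + m : ℕ) : ℝ) + 1 / 2) / cstar (m + m) = fseq m := by
      rw [hcs]
      unfold fseq aseq
      rw [div_pow, h16]
      field_simp
      push_cast
      ring
    have hε : (0:ℝ) < eps m := by unfold eps; positivity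
    have h1 : (0:ℝ) < 1 - eps m := by linarith [eps_lt m]
    have e4 : 1 - 1 / (16 * (((m + m : ℕ) : ℝ) + 1 / 2) ^ 2) = 1 - eps m := by
      unfold eps
      push_cast
      ring_nf
    rw [e3]
    rw [e4]
    have hle : (1 - eps m) ^ 2 ≤ fseq m := by
      have hg := one_le_gseq m
      unfold gseq at hg
      rw [le_div_iff₀ (by positivity)] at hg
      linarith
    calc 1 - eps m = Real.sqrt ((1 - eps m) ^ 2) := (Real.sqrt_sq h1.le).symm
      _ ≤ Real.sqrt (fseq m) := Real.sqrt_le_sqrt hle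
  · -- upper bound
    have e3 : (((m + m : ℕ) : ℝ) + 1 / 2) / cstar (m + m) = fseq m := by
      rw [hcs]
      unfold fseq aseq
      rw [div_pow, h16]
      field_simp
      push_cast
      ring
    have hε : (0:ℝ) < eps m := by unfold eps; positivity
    have h1 : (0:ℝ) < 1 - eps m := by linarith [eps_lt m]
    have e4 : 1 - 1 / (16 * (((m + m : ℕ) : ℝ) + 1 / 2) ^ 2) = 1 - eps m := by
      unfold eps
      push_cast
      ring_nf
    rw [e3]
    calc Real.sqrt (fseq m) ≤ Real.sqrt 1 := Real.sqrt_le_sqrt (fseq_le_one m)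
      _ = 1 := Real.sqrt_one
end
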